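/- Let 0 < β < 1, ε > 0 and let g(x) = ((1-α)Σ_{k∈-ℕ₀} α^{-k} x_k)/(ε + √((1-β)Σ_{k∈-ℕ₀} β^{-k} x_k²)) on ℓ_ϱ (with 0 ≤ α < √β). For n ≥ 1, let σ_n m_n denote the Adam update with bias correction, i.e. σ_n m_n = ((1-α)Σ_{k≤0} α^{-k} X_{n+k})/(ε + √((1-β)/(1-β^n) Σ_{k≤0} β^{-k} X_{n+k}²)). Then |σ_n m_n − g(X(n))| ≤ 2β^n ‖X(n)‖_{ℓ_ϱ}, where X(n) = (X_{n+k})_{k∈-ℕ₀}. -/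

import Mathlib

open scoped ENNReal

/-- The map `g` from the Adam sequence space to `ℝ` (scalar case, index `j : ℕ`
corresponding to the nonpositive integer `-j`); `g x = 0` if the denominator diverges. -/
noncomputable def adamG (α β ε : ℝ) (x : ℕ → ℝ) : ℝ :=
  if (∑' j : ℕ, ENNReal.ofReal ((1 - β) * β ^ j * (x j) ^ 2)) = ∞ then 0
  else ((1 - α) * ∑' j : ℕ, α ^ j * x j) /
    (ε + Real.sqrt (∑' j : ℕ, ENNReal.ofReal ((1 - β) * β ^ j * (x j) ^ 2)).toReal)

lemma aux_frac (A ε u s c N : ℝ) (hε : 0 < ε) (hu : 0 ≤ u) (hs : 0 < s) (hs1 : s ≤ 1)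
    (hc : 1 - s ≤ c) (hc0 : 0 ≤ c) (hA : |A| ≤ ε * N) :
    |A / (ε + u / s) - A / (ε + u)| ≤ 2 * c * N := by
  have hN : 0 ≤ N := by nlinarith [abs_nonneg A]
  have hD : 0 < ε + u := by linarith
  have hD' : 0 < ε + u / s := by positivity
  have key : A / (ε + u / s) - A / (ε + u) = -(A * (u * (1 - s))) / (s * (ε + u / s) * (ε + u)) := by
    field_simp
    ring
  rw [key, abs_div, abs_neg, abs_mul, abs_of_nonneg (by nlinarith : (0:ℝ) ≤ u * (1 - s)),
    abs_of_pos (by positivity : (0:ℝ) < s * (ε + u / s) * (ε + u))]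
  rw [div_le_iff₀ (by positivity)]
  have h1 : s * (ε + u / s) = s * ε + u := by field_simp
  have h2 : |A| * (u * (1 - s)) ≤ ε * N * (u * c) := by
    have e1 : 0 ≤ (ε * N - |A|) * (u * (1 - s)) :=
      mul_nonneg (by linarith) (by nlinarith)
    have e2 : 0 ≤ ε * N * u * (c - (1 - s)) :=
      mul_nonneg (mul_nonneg (mul_nonneg hε.le hN) hu) (by linarith)
    nlinarith
  rw [h1]
  nlinarith [mul_nonneg (mul_nonneg (mul_nonneg (mul_nonneg hc0 hN) hs.le) hε.le) hε.le,
    mul_nonneg (mul_nonneg (mul_nonneg (mul_nonneg hc0 hN) hs.le) hε.le) hu,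
    mul_nonneg (mul_nonneg (mul_nonneg hc0 hN) hu) hu]


/-- the bias-corrected Adam update `σ_n m_n` differs from `g(X(n))`,
where `X(n) = (X_{n+k})_{k∈-ℕ₀}` (here `fun j : ℕ => X (n - j)`), by at most
`2 β^n ‖X(n)‖_{ℓ_ϱ}`. -/
theorem stmt14_bias_correction_error (α β ε : ℝ) (hα : 0 ≤ α) (hαβ : α < Real.sqrt β)
    (hβ : Real.sqrt β < 1) (hε : 0 < ε)
    (ϱ : ℕ → ℝ)
    (hϱ : ∀ k : ℕ, ϱ k = (1 - α) * ε⁻¹ * (α ^ k + (1 / Real.sqrt (1 - α ^ 2 / β)) * (Real.sqrt β) ^ k))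
    (X : ℤ → ℝ) (n : ℕ) (hn : 1 ≤ n)
    (hℓϱ : Summable fun j : ℕ => ϱ j * |X ((n : ℤ) - j)|)
    (hsum_v : Summable fun j : ℕ => β ^ j * (X ((n : ℤ) - j)) ^ 2)
    (σm : ℝ)
    (hσm : σm = ((1 - α) * ∑' j : ℕ, α ^ j * X ((n : ℤ) - j)) /
      (ε + Real.sqrt ((1 - β) / (1 - β ^ n) * ∑' j : ℕ, β ^ j * (X ((n : ℤ) - j)) ^ 2))) :
    |σm - adamG α β ε (fun j : ℕ => X ((n : ℤ) - j))|
      ≤ 2 * β ^ n * ∑' j : ℕ, ϱ j * |X ((n : ℤ) - j)| := by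
  set x : ℕ → ℝ := fun j : ℕ => X ((n : ℤ) - j) with hx
  have hsb : 0 < Real.sqrt β := lt_of_le_of_lt hα hαβ
  have hβ0 : 0 < β := by
    by_contra h
    push_neg at h
    rw [Real.sqrt_eq_zero_of_nonpos h] at hsb
    exact lt_irrefl 0 hsb
  have hβ1 : β < 1 := by nlinarith [Real.sq_sqrt hβ0.le]
  have hα1 : α < 1 := hαβ.trans hβ
  have h1α : 0 < 1 - α := by linarith
  set S : ℝ := ∑' j : ℕ, β ^ j * (x j) ^ 2 with hS
  have hS0 : 0 ≤ S := tsum_nonneg fun j => by positivity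
  have hβ1' : (0:ℝ) ≤ 1 - β := by linarith
  -- rewrite adamG
  have hsum' : Summable fun j : ℕ => (1 - β) * β ^ j * (x j) ^ 2 := by
    simpa [mul_assoc] using hsum_v.mul_left (1 - β)
  have htsum_en : (∑' j : ℕ, ENNReal.ofReal ((1 - β) * β ^ j * (x j) ^ 2))
      = ENNReal.ofReal ((1 - β) * S) := by
    rw [← ENNReal.ofReal_tsum_of_nonneg
      (fun j => mul_nonneg (mul_nonneg hβ1' (by positivity)) (sq_nonneg _)) hsum']
    congr 1
    rw [hS, ← tsum_mul_left]
    exact tsum_congr fun j => by ring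
  have hG : adamG α β ε x
      = ((1 - α) * ∑' j : ℕ, α ^ j * x j) / (ε + Real.sqrt ((1 - β) * S)) := by
    rw [adamG, htsum_en, if_neg ENNReal.ofReal_ne_top,
      ENNReal.toReal_ofReal (mul_nonneg hβ1' hS0)]
  -- sqrt splitting
  have htn : β ^ n < 1 := pow_lt_one₀ hβ0.le hβ1 (by omega)
  have htn0 : 0 < 1 - β ^ n := by linarith
  set s := Real.sqrt (1 - β ^ n) with hsdef
  have hs : 0 < s := Real.sqrt_pos.mpr htn0
  have hs1 : s ≤ 1 := Real.sqrt_le_one.mpr (by nlinarith [pow_nonneg hβ0.le n])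
  have hsq : s ^ 2 = 1 - β ^ n := Real.sq_sqrt htn0.le
  have hc : 1 - s ≤ β ^ n := by nlinarith
  have hsplit : Real.sqrt ((1 - β) / (1 - β ^ n) * S) = Real.sqrt ((1 - β) * S) / s := by
    rw [show (1 - β) / (1 - β ^ n) * S = ((1 - β) * S) / (1 - β ^ n) by ring,
      Real.sqrt_div (mul_nonneg hβ1' hS0)]
  -- pointwise comparison
  have hϱpos : ∀ j : ℕ, (1 - α) * α ^ j ≤ ε * ϱ j := by
    intro j
    rw [hϱ j]
    have h1 : 0 ≤ (1 / Real.sqrt (1 - α ^ 2 / β)) * (Real.sqrt β) ^ j := by positivity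
    have h2 : ε * ((1 - α) * ε⁻¹ * (α ^ j + (1 / Real.sqrt (1 - α ^ 2 / β)) * (Real.sqrt β) ^ j))
        = (1 - α) * α ^ j + (1 - α) * ((1 / Real.sqrt (1 - α ^ 2 / β)) * (Real.sqrt β) ^ j) := by
      field_simp
    rw [h2]
    nlinarith [mul_nonneg h1α.le h1]
  have hpt : ∀ j : ℕ, (1 - α) * (α ^ j * |x j|) ≤ ε * (ϱ j * |x j|) := by
    intro j
    have := mul_le_mul_of_nonneg_right (hϱpos j) (abs_nonneg (x j))
    calc (1 - α) * (α ^ j * |x j|) = (1 - α) * α ^ j * |x j| := by ring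
    _ ≤ ε * ϱ j * |x j| := this
    _ = ε * (ϱ j * |x j|) := by ring
  have hsumA : Summable fun j : ℕ => (1 - α) * (α ^ j * |x j|) :=
    Summable.of_nonneg_of_le (fun j => by positivity) hpt (hℓϱ.mul_left ε)
  have hsumA' : Summable fun j : ℕ => α ^ j * |x j| := by
    have h := hsumA.mul_left (1 - α)⁻¹
    simpa [← mul_assoc, inv_mul_cancel₀ h1α.ne'] using h
  have heq : ∀ j : ℕ, ‖α ^ j * x j‖ = α ^ j * |x j| := fun j => by
    rw [Real.norm_eq_abs, abs_mul, abs_of_nonneg (pow_nonneg hα j)]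
  have hT : |∑' j : ℕ, α ^ j * x j| ≤ ∑' j : ℕ, α ^ j * |x j| := by
    have h := norm_tsum_le_tsum_norm (f := fun j : ℕ => α ^ j * x j)
      (hsumA'.congr fun j => (heq j).symm)
    rw [Real.norm_eq_abs] at h
    calc |∑' j : ℕ, α ^ j * x j| ≤ ∑' j : ℕ, ‖α ^ j * x j‖ := h
    _ = ∑' j : ℕ, α ^ j * |x j| := tsum_congr heq
  have hA : |(1 - α) * ∑' j : ℕ, α ^ j * x j| ≤ ε * ∑' j : ℕ, ϱ j * |x j| := by
    rw [abs_mul, abs_of_nonneg h1α.le]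
    calc (1 - α) * |∑' j : ℕ, α ^ j * x j| ≤ (1 - α) * ∑' j : ℕ, α ^ j * |x j| :=
      mul_le_mul_of_nonneg_left hT h1α.le
    _ = ∑' j : ℕ, (1 - α) * (α ^ j * |x j|) := (tsum_mul_left).symm
    _ ≤ ∑' j : ℕ, ε * (ϱ j * |x j|) := Summable.tsum_le_tsum hpt hsumA (hℓϱ.mul_left ε)
    _ = ε * ∑' j : ℕ, ϱ j * |x j| := tsum_mul_left
  rw [hσm, hG, hsplit]
  exact aux_frac _ ε (Real.sqrt ((1 - β) * S)) s (β ^ n)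
    (∑' j : ℕ, ϱ j * |x j|) hε (Real.sqrt_nonneg _) hs hs1 hc (by positivity) hA
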